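/- For all s > 0, the DF exchange rate constraints R ≤ min(Δ₁,Δ₂)·log₂(1+s), 2R ≤ Δ₁·log₂(1+2s), 3R ≤ Δ₁·log₂(1+3s), optimized over Δ₁ ∈ [0,1] with Δ₂ = 1−Δ₁, yield the maximum achievable symmetric rate log₂(1+s)·log₂(1+3s)/(3·log₂(1+s)+log₂(1+3s)). -/

import Mathlib

open Real

theorem stmt10 (s : ℝ) (hs : 0 < s) :
    let V := logb 2 (1 + s) * logb 2 (1 + 3 * s) /
      (3 * logb 2 (1 + s) + logb 2 (1 + 3 * s))
    (∃ Δ₁ ∈ Set.Icc (0:ℝ) 1,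
      V ≤ min Δ₁ (1 - Δ₁) * logb 2 (1 + s) ∧
      2 * V ≤ Δ₁ * logb 2 (1 + 2 * s) ∧
      3 * V ≤ Δ₁ * logb 2 (1 + 3 * s)) ∧
    ∀ Δ₁ ∈ Set.Icc (0:ℝ) 1, ∀ R : ℝ, 0 ≤ R →
      R ≤ min Δ₁ (1 - Δ₁) * logb 2 (1 + s) →
      2 * R ≤ Δ₁ * logb 2 (1 + 2 * s) →
      3 * R ≤ Δ₁ * logb 2 (1 + 3 * s) → R ≤ V := by
  intro V
  set a := logb 2 (1 + s) with ha_def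
  set b := logb 2 (1 + 2 * s) with hb_def
  set c := logb 2 (1 + 3 * s) with hc_def
  have ha : 0 < a := logb_pos (by norm_num) (by linarith)
  have hc : 0 < c := logb_pos (by norm_num) (by linarith)
  have hD : 0 < 3 * a + c := by linarith
  -- c ≤ 3a since 1+3s ≤ (1+s)^3
  have hca : c ≤ 3 * a := by
    have h := logb_le_logb_of_le (by norm_num : (1:ℝ) < 2)
      (by positivity : (0:ℝ) < 1 + 3 * s)
      (by nlinarith [sq_nonneg s, mul_nonneg (mul_nonneg hs.le hs.le) hs.le] : 1 + 3 * s ≤ (1 + s) ^ 3)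
    rwa [logb_pow] at h
  -- 2c ≤ 3b since (1+3s)^2 ≤ (1+2s)^3
  have hcb : 2 * c ≤ 3 * b := by
    have h := logb_le_logb_of_le (by norm_num : (1:ℝ) < 2)
      (by positivity : (0:ℝ) < (1 + 3 * s) ^ 2)
      (by nlinarith [sq_nonneg s, mul_nonneg (mul_nonneg hs.le hs.le) hs.le] : (1 + 3 * s) ^ 2 ≤ (1 + 2 * s) ^ 3)
    rw [logb_pow, logb_pow] at h
    push_cast at h
    linarith
  have hV : V = a * c / (3 * a + c) := rfl
  constructor
  · refine ⟨3 * a / (3 * a + c), ⟨by positivity, ?_⟩, ?_, ?_, ?_⟩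
    · rw [div_le_one hD]; linarith
    · have hΔ : (1:ℝ) - 3 * a / (3 * a + c) = c / (3 * a + c) := by
        field_simp
        ring
      rcases min_cases (3 * a / (3 * a + c)) (1 - 3 * a / (3 * a + c)) with ⟨h, _⟩ | ⟨h, _⟩
      · rw [h, hV, div_mul_eq_mul_div, div_le_div_iff₀ hD hD]
        nlinarith [mul_le_mul_of_nonneg_right
          (mul_le_mul_of_nonneg_left hca ha.le) hD.le]
      · rw [h, hΔ, hV, div_mul_eq_mul_div, div_le_div_iff₀ hD hD]
        nlinarith
    · rw [hV, div_mul_eq_mul_div, ← mul_div_assoc, div_le_div_iff₀ hD hD]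
      nlinarith [mul_le_mul_of_nonneg_right
        (mul_le_mul_of_nonneg_left hcb ha.le) hD.le]
    · rw [hV, div_mul_eq_mul_div, ← mul_div_assoc, div_le_div_iff₀ hD hD]
      nlinarith
  · rintro Δ₁ ⟨h0, h1⟩ R hR hmin h2 h3
    have hmin' : R ≤ (1 - Δ₁) * a :=
      le_trans hmin (mul_le_mul_of_nonneg_right (min_le_right _ _) ha.le)
    rw [hV, le_div_iff₀ hD]
    nlinarith [mul_le_mul_of_nonneg_right h3 ha.le,
      mul_le_mul_of_nonneg_right hmin' hc.le]
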